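/- Suppose CTM r > 0 for every base block r. If the coarse conditional BDM of X given Y is zero, BDM(X|Y) = 0, then every base block occurring in X also occurs in Y (supp n_X ⊆ supp n_Y), and moreover every base block r of X with multiplicity n_X r ≥ 2 satisfies n_X r = n_Y r. -/
import Mathlib


open Finsupp

/-- The multiplicity correction term: `f n m = 0` if `n = m`, else `log n`. -/
noncomputable def bdmF (n m : ℕ) : ℝ := if n = m then 0 else Real.log n

/-- The (unconditional) BDM of a decomposed object given by its multiplicity function. -/
noncomputable def BDM {R : Type*} (CTM : R → ℝ) (X : R →₀ ℕ) : ℝ :=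
  ∑ r ∈ X.support, (CTM r + Real.log (X r))

/-- The coarse conditional BDM of `X` given `Y`. -/
noncomputable def condBDM {R : Type*} [DecidableEq R] (CTM : R → ℝ) (X Y : R →₀ ℕ) : ℝ :=
  ∑ r ∈ X.support \ Y.support, (CTM r + Real.log (X r)) +
  ∑ r ∈ X.support ∩ Y.support, bdmF (X r) (Y r)


/-- Suppose `CTM r > 0` for every base block. If `BDM(X|Y) = 0`, then every base block of `X`
occurs in `Y`, and every base block of `X` with multiplicity at least 2 has the same
multiplicity in `Y`. -/
theorem condBDM_eq_zero_imp {R : Type*} [DecidableEq R] (CTM : R → ℝ)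
    (hCTM : ∀ r, 0 < CTM r) (X Y : R →₀ ℕ) (h : condBDM CTM X Y = 0) :
    X.support ⊆ Y.support ∧ ∀ r ∈ X.support, 2 ≤ X r → X r = Y r := by
  have hterm1 : ∀ r ∈ X.support \ Y.support, 0 ≤ CTM r + Real.log (X r) := by
    intro r hr
    have hx : 1 ≤ (X r : ℝ) := by
      have := Finsupp.mem_support_iff.mp (Finset.mem_sdiff.mp hr).1
      exact_mod_cast Nat.one_le_iff_ne_zero.mpr this
    have := Real.log_nonneg hx
    linarith [hCTM r]
  have hterm2 : ∀ r ∈ X.support ∩ Y.support, 0 ≤ bdmF (X r) (Y r) := by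
    intro r hr
    unfold bdmF
    split
    · exact le_refl 0
    · have hx : 1 ≤ (X r : ℝ) := by
        have := Finsupp.mem_support_iff.mp (Finset.mem_inter.mp hr).1
        exact_mod_cast Nat.one_le_iff_ne_zero.mpr this
      exact Real.log_nonneg hx
  have h1 : (0:ℝ) ≤ ∑ r ∈ X.support \ Y.support, (CTM r + Real.log (X r)) :=
    Finset.sum_nonneg hterm1
  have h2 : (0:ℝ) ≤ ∑ r ∈ X.support ∩ Y.support, bdmF (X r) (Y r) :=
    Finset.sum_nonneg hterm2
  unfold condBDM at h
  have hs1 : ∑ r ∈ X.support \ Y.support, (CTM r + Real.log (X r)) = 0 := by linarith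
  have hs2 : ∑ r ∈ X.support ∩ Y.support, bdmF (X r) (Y r) = 0 := by linarith
  have hall1 := (Finset.sum_eq_zero_iff_of_nonneg hterm1).mp hs1
  have hall2 := (Finset.sum_eq_zero_iff_of_nonneg hterm2).mp hs2
  have hsub : X.support ⊆ Y.support := by
    intro r hr
    by_contra hry
    have hmem : r ∈ X.support \ Y.support := Finset.mem_sdiff.mpr ⟨hr, hry⟩
    have := hall1 r hmem
    have hx : 1 ≤ (X r : ℝ) := by
      have := Finsupp.mem_support_iff.mp hr
      exact_mod_cast Nat.one_le_iff_ne_zero.mpr this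
    have := Real.log_nonneg hx
    linarith [hCTM r]
  refine ⟨hsub, fun r hr h2le => ?_⟩
  have hmem : r ∈ X.support ∩ Y.support := Finset.mem_inter.mpr ⟨hr, hsub hr⟩
  have := hall2 r hmem
  unfold bdmF at this
  by_contra hne
  rw [if_neg hne] at this
  have hx : (1:ℝ) < (X r : ℝ) := by exact_mod_cast h2le
  have := Real.log_pos hx
  linarith
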